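/- arXiv:math/0401311 — 5 statements merged into one kernel-verified Lean document; each statement's English description precedes it below -/
import Mathlib

section
/- Every good set is a linearly independent family of 2k vectors, hence a basis of ℝ^{2k}. In particular Δ₁ = convexHull(A ∪ B) and Δ₂ = convexHull(B ∪ C) are (2k−1)-dimensional simplices (their vertex sets are affinely independent). -/
noncomputable section

/-- The ambient space `ℝ^{2k}`, written as pairs `(x, y)` with `x, y ∈ ℝ^k`. -/
abbrev V (k : ℕ) := (Fin k ⊕ Fin k) → ℝ

/-- `A_j = (e_j, 0)`. -/
def vA (k : ℕ) (j : Fin k) : V k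
  | .inl i => if i = j then 1 else 0
  | .inr _ => 0

/-- `B_j = (1/(2n)) · (2·𝟙 − e_j, 2·𝟙 − e_j)` with `n = 2k − 1`. -/
def vB (k : ℕ) (j : Fin k) : V k
  | .inl i => (2 - if i = j then 1 else 0) / (2 * (2 * (k : ℝ) - 1))
  | .inr i => (2 - if i = j then 1 else 0) / (2 * (2 * (k : ℝ) - 1))

/-- `C_j = (0, e_j)`. -/
def vC (k : ℕ) (j : Fin k) : V k
  | .inl _ => 0
  | .inr i => if i = j then 1 else 0

def setA (k : ℕ) : Set (V k) := Set.range (vA k)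
def setB (k : ℕ) : Set (V k) := Set.range (vB k)
def setC (k : ℕ) : Set (V k) := Set.range (vC k)
def setX (k : ℕ) : Set (V k) := setA k ∪ setB k ∪ setC k

/-- A subset `S ⊆ X` is good if it has exactly `2k` elements, contains no full
triple `{A_j, B_j, C_j}`, and `S ≠ A ∪ C`. -/
def IsGood (k : ℕ) (S : Set (V k)) : Prop :=
  S ⊆ setX k ∧ S.ncard = 2 * k ∧
  (∀ j : Fin k, ¬ (({vA k j, vB k j, vC k j} : Set (V k)) ⊆ S)) ∧
  S ≠ setA k ∪ setC k

def Delta0 (k : ℕ) : Set (V k) := convexHull ℝ (setA k ∪ setC k)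
def Delta1 (k : ℕ) : Set (V k) := convexHull ℝ (setA k ∪ setB k)
def Delta2 (k : ℕ) : Set (V k) := convexHull ℝ (setB k ∪ setC k)

/-- The modular block `Ω = closure(Δ₀ \ (Δ₁ ∪ Δ₂))`. -/
def OmegaB (k : ℕ) : Set (V k) := closure (Delta0 k \ (Delta1 k ∪ Delta2 k))

namespace Stmt1Aux

/-- The family of `2k` vectors determined by a choice `c : Fin k → Fin 3` of a pair
from each column: `c j = 0` picks `{A_j, B_j}`, `c j = 1` picks `{A_j, C_j}`,
`c j = 2` picks `{B_j, C_j}`. -/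
def fam (k : ℕ) (c : Fin k → Fin 3) : Fin k ⊕ Fin k → V k
  | .inl j => if c j = 2 then vB k j else vA k j
  | .inr j => if c j = 0 then vB k j else vC k j

lemma denom_pos {k : ℕ} (hk : 1 ≤ k) : (0:ℝ) < 2 * (2 * (k : ℝ) - 1) := by
  have : (1:ℝ) ≤ (k:ℝ) := by exact_mod_cast hk
  nlinarith

/-- Any of the families `fam k c` is linearly independent. -/
lemma fam_li {k : ℕ} (hk : 1 ≤ k) (c : Fin k → Fin 3) :
    LinearIndependent ℝ (fam k c) := by
  classical
  have hN : (2 * (2 * (k : ℝ) - 1)) ≠ 0 := ne_of_gt (denom_pos hk)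
  set N : ℝ := 2 * (2 * (k : ℝ) - 1) with hNdef
  rw [Fintype.linearIndependent_iff]
  intro g hg
  set a : Fin k → ℝ := fun j => if c j = 2 then 0 else g (.inl j) with ha
  set b : Fin k → ℝ := fun j =>
    if c j = 0 then g (.inr j) else if c j = 2 then g (.inl j) else 0 with hb
  set d : Fin k → ℝ := fun j => if c j = 0 then 0 else g (.inr j) with hd
  set β : ℝ := ∑ j, b j with hβ
  -- the two coordinate equations
  have key : ∀ i : Fin k, a i * N + (2 * β - b i) = 0 ∧ d i * N + (2 * β - b i) = 0 := by
    intro i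
    have h1 := congrFun hg (Sum.inl i)
    have h2 := congrFun hg (Sum.inr i)
    simp only [Finset.sum_apply, Pi.smul_apply, smul_eq_mul, Pi.zero_apply,
      Fintype.sum_sum_type] at h1 h2
    have e1 : ∀ j : Fin k,
        g (Sum.inl j) * fam k c (Sum.inl j) (Sum.inl i) +
        g (Sum.inr j) * fam k c (Sum.inr j) (Sum.inl i)
        = a j * (if i = j then 1 else 0) + b j * ((2 - if i = j then 1 else 0) / N) := by
      intro j
      have h3 : c j = 0 ∨ c j = 1 ∨ c j = 2 := by omega
      rcases h3 with h | h | h <;>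
        simp [fam, vA, vB, vC, ha, hb, h, ← hNdef] <;> ring
    have e2 : ∀ j : Fin k,
        g (Sum.inl j) * fam k c (Sum.inl j) (Sum.inr i) +
        g (Sum.inr j) * fam k c (Sum.inr j) (Sum.inr i)
        = d j * (if i = j then 1 else 0) + b j * ((2 - if i = j then 1 else 0) / N) := by
      intro j
      have h3 : c j = 0 ∨ c j = 1 ∨ c j = 2 := by omega
      rcases h3 with h | h | h <;>
        simp [fam, vA, vB, vC, hd, hb, h, ← hNdef] <;> ring
    rw [← Finset.sum_add_distrib, Finset.sum_congr rfl (fun j _ => e1 j)] at h1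
    rw [← Finset.sum_add_distrib, Finset.sum_congr rfl (fun j _ => e2 j)] at h2
    have split : ∀ f : Fin k → ℝ,
        (∑ j, (f j * (if i = j then 1 else 0) + b j * ((2 - if i = j then 1 else 0) / N)))
          = f i + (2 * β - b i) / N := by
      intro f
      rw [Finset.sum_add_distrib]
      have s1 : (∑ j, f j * (if i = j then 1 else 0)) = f i := by
        simp [mul_ite]
      have s2 : (∑ j, b j * ((2 - if i = j then 1 else 0) / N))
          = (2 * β - b i) / N := by
        have : ∀ j : Fin k, b j * ((2 - if i = j then 1 else 0) / N)
            = (2 * b j) / N - (if i = j then b j else 0) / N := by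
          intro j; split_ifs <;> ring
        rw [Finset.sum_congr rfl fun j _ => this j, Finset.sum_sub_distrib,
          ← Finset.sum_div, ← Finset.sum_div, ← Finset.mul_sum]
        simp only [Finset.sum_ite_eq, Finset.mem_univ, if_true, ← hβ]
        ring
      rw [s1, s2]
    rw [split] at h1
    rw [split] at h2
    constructor
    · have := h1
      field_simp at this ⊢
      linarith
    · have := h2
      field_simp at this ⊢
      linarith
  -- each B-coefficient is 2β or 0
  have hbval : ∀ j : Fin k, b j = if c j = 1 then 0 else 2 * β := by
    intro j
    obtain ⟨k1, k2⟩ := key j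
    have h3 : c j = 0 ∨ c j = 1 ∨ c j = 2 := by omega
    rcases h3 with h | h | h
    · have hdj : d j = 0 := by simp [hd, h]
      rw [hdj] at k2
      simp [h]; linarith
    · simp [hb, h]
    · have haj : a j = 0 := by simp [ha, h]
      rw [haj] at k1
      simp [h]; linarith
  -- β = 0
  have hβ0 : β = 0 := by
    have : β = ∑ j, (if c j = 1 then 0 else 2 * β) := by
      rw [hβ]; exact Finset.sum_congr rfl fun j _ => hbval j
    rw [Finset.sum_ite] at this
    simp only [Finset.sum_const, Finset.sum_const_zero, smul_eq_mul, zero_add,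
      mul_zero, nsmul_eq_mul] at this
    set m : ℕ := (Finset.univ.filter fun j => ¬ c j = 1).card with hm
    have h2m : (2 * (m:ℝ)) ≠ 1 := by
      intro hcon
      have : (2 * m : ℕ) = 1 := by exact_mod_cast (by push_cast; linarith : ((2*m : ℕ):ℝ) = 1)
      omega
    by_contra hβne
    apply h2m
    have hz : β * (2 * (m:ℝ) - 1) = 0 := by linear_combination -this
    rcases mul_eq_zero.1 hz with h | h
    · exact absurd h hβne
    · linarith
  -- all coefficients vanish
  have hb0 : ∀ j, b j = 0 := by
    intro j; rw [hbval j, hβ0]; split_ifs <;> ring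
  have ha0 : ∀ j, a j = 0 := by
    intro j
    obtain ⟨k1, _⟩ := key j
    rw [hb0 j, hβ0] at k1
    have : a j * N = 0 := by linarith
    rcases mul_eq_zero.1 this with h | h
    · exact h
    · exact absurd h hN
  have hd0 : ∀ j, d j = 0 := by
    intro j
    obtain ⟨_, k2⟩ := key j
    rw [hb0 j, hβ0] at k2
    have : d j * N = 0 := by linarith
    rcases mul_eq_zero.1 this with h | h
    · exact h
    · exact absurd h hN
  rintro (j | j)
  · by_cases h : c j = 2
    · have := hb0 j
      simpa [hb, h] using this
    · have := ha0 j
      simpa [ha, h] using this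
  · by_cases h : c j = 0
    · have := hb0 j
      simpa [hb, h] using this
    · have := hd0 j
      simpa [hd, h] using this

lemma fam_range_ncard {k : ℕ} (hk : 1 ≤ k) (c : Fin k → Fin 3) :
    (Set.range (fam k c)).ncard = 2 * k := by
  have hinj : Function.Injective (fam k c) := (fam_li hk c).injective
  rw [← Set.image_univ, Set.ncard_image_of_injective _ hinj, Set.ncard_univ,
    Nat.card_eq_fintype_card, Fintype.card_sum, Fintype.card_fin]
  omega

/-- Every good set is the range of some `fam k c`. -/
lemma good_eq_fam {k : ℕ} (hk : 1 ≤ k) {S : Set (V k)} (hS : IsGood k S) :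
    ∃ c : Fin k → Fin 3, S = Set.range (fam k c) := by
  classical
  obtain ⟨hsub, hcard, htriple, -⟩ := hS
  refine ⟨fun j => if vA k j ∈ S then (if vB k j ∈ S then 0 else 1) else 2, ?_⟩
  set c : Fin k → Fin 3 := fun j => if vA k j ∈ S then (if vB k j ∈ S then 0 else 1) else 2
    with hc
  have hfin : (Set.range (fam k c)).Finite := Set.finite_range _
  apply Set.eq_of_subset_of_ncard_le _ _ hfin
  · -- S ⊆ range (fam k c)
    intro x hx
    have hx' := hsub hx
    rcases hx' with (⟨j, rfl⟩ | ⟨j, rfl⟩) | ⟨j, rfl⟩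
    · -- x = vA k j ∈ S, so c j ≠ 2
      refine ⟨Sum.inl j, ?_⟩
      have hA : vA k j ∈ S := hx
      have : c j ≠ 2 := by
        simp only [hc, hA, if_true]
        split_ifs <;> decide
      simp [fam, this]
    · -- x = vB k j ∈ S
      have hB : vB k j ∈ S := hx
      by_cases hA : vA k j ∈ S
      · refine ⟨Sum.inr j, ?_⟩
        have : c j = 0 := by simp [hc, hA, hB]
        simp [fam, this]
      · refine ⟨Sum.inl j, ?_⟩
        have : c j = 2 := by simp [hc, hA]
        simp [fam, this]
    · -- x = vC k j ∈ S, so c j ≠ 0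
      refine ⟨Sum.inr j, ?_⟩
      have hC : vC k j ∈ S := hx
      have : c j ≠ 0 := by
        simp only [hc]
        split_ifs with h1 h2
        · -- A,B ∈ S, and C ∈ S : contradicts no-full-triple
          exact absurd (by
            intro y hy
            rcases hy with rfl | rfl | rfl
            · exact h1
            · exact h2
            · exact hC) (htriple j)
        · decide
        · decide
      simp [fam, this]
  · rw [fam_range_ncard hk c, hcard]

lemma range_fam_zero (k : ℕ) :
    Set.range (fam k (fun _ => 0)) = setA k ∪ setB k := by
  ext x
  constructor
  · rintro ⟨(j | j), rfl⟩
    · exact Or.inl ⟨j, by simp [fam]⟩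
    · exact Or.inr ⟨j, by simp [fam]⟩
  · rintro (⟨j, rfl⟩ | ⟨j, rfl⟩)
    · exact ⟨Sum.inl j, by simp [fam]⟩
    · exact ⟨Sum.inr j, by simp [fam]⟩

lemma range_fam_two (k : ℕ) :
    Set.range (fam k (fun _ => 2)) = setB k ∪ setC k := by
  ext x
  constructor
  · rintro ⟨(j | j), rfl⟩
    · exact Or.inl ⟨j, by simp [fam]⟩
    · exact Or.inr ⟨j, by simp [fam]⟩
  · rintro (⟨j, rfl⟩ | ⟨j, rfl⟩)
    · exact ⟨Sum.inl j, by simp [fam]⟩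
    · exact ⟨Sum.inr j, by simp [fam]⟩

lemma li_of_range {k : ℕ} (hk : 1 ≤ k) (c : Fin k → Fin 3) :
    LinearIndependent ℝ ((↑) : (Set.range (fam k c)) → V k) :=
  (fam_li hk c).linearIndepOn_id

lemma span_of_range {k : ℕ} (hk : 1 ≤ k) (c : Fin k → Fin 3) :
    Submodule.span ℝ (Set.range (fam k c)) = ⊤ := by
  have hne : Nonempty (Fin k ⊕ Fin k) := ⟨Sum.inl ⟨0, hk⟩⟩
  exact (fam_li hk c).span_eq_top_of_card_eq_finrank
    (by rw [Fintype.card_sum, Fintype.card_fin, Module.finrank_fintype_fun_eq_card,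
      Fintype.card_sum, Fintype.card_fin])

lemma ai_of_li {k : ℕ} {s : Set (V k)}
    (h : LinearIndependent ℝ ((↑) : s → V k)) :
    AffineIndependent ℝ ((↑) : s → V k) :=
  affineIndependent_iff.2 fun t w _ h0 => linearIndependent_iff'.1 h t w h0

end Stmt1Aux

/-- Every good set is a linearly independent family of `2k` vectors, hence a basis of
`ℝ^{2k}`.  In particular the vertex sets `A ∪ B` of `Δ₁` and `B ∪ C` of `Δ₂` are
affinely independent, so `Δ₁` and `Δ₂` are `(2k−1)`-dimensional simplices. -/
theorem stmt_1 (k : ℕ) (hk : 2 ≤ k) :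
    (∀ S : Set (V k), IsGood k S →
      LinearIndependent ℝ ((↑) : S → V k) ∧ Submodule.span ℝ S = ⊤) ∧
    AffineIndependent ℝ ((↑) : (setA k ∪ setB k : Set (V k)) → V k) ∧
    AffineIndependent ℝ ((↑) : (setB k ∪ setC k : Set (V k)) → V k) := by
  have hk1 : 1 ≤ k := le_trans (by norm_num) hk
  refine ⟨?_, ?_, ?_⟩
  · intro S hS
    obtain ⟨c, rfl⟩ := Stmt1Aux.good_eq_fam hk1 hS
    exact ⟨Stmt1Aux.li_of_range hk1 c, Stmt1Aux.span_of_range hk1 c⟩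
  · rw [← Stmt1Aux.range_fam_zero k]
    exact Stmt1Aux.ai_of_li (Stmt1Aux.li_of_range hk1 _)
  · rw [← Stmt1Aux.range_fam_two k]
    exact Stmt1Aux.ai_of_li (Stmt1Aux.li_of_range hk1 _)
end
end

section
/- convexHull(A ∪ B) ∩ convexHull(B ∪ C) = convexHull(B). Moreover every point of B lies in the intrinsic (relative) interior of Δ₀ = convexHull(A ∪ C), so the intrinsic boundaries of Δ₀ and Δ₁ meet exactly in convexHull(A), and the intrinsic boundaries of Δ₀ and Δ₂ meet exactly in convexHull(C). -/
noncomputable section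

/-! ### Auxiliary lemmas -/

lemma setAC (k : ℕ) :
    setA k ∪ setC k = Set.range (fun i j : Fin k ⊕ Fin k => if i = j then (1:ℝ) else 0) := by
  ext x
  constructor
  · rintro (⟨j, rfl⟩ | ⟨j, rfl⟩)
    · exact ⟨Sum.inl j, by funext s; cases s with
        | inl i => simp [vA, eq_comm]
        | inr i => simp [vA]⟩
    · exact ⟨Sum.inr j, by funext s; cases s with
        | inl i => simp [vC]
        | inr i => simp [vC, eq_comm]⟩
  · rintro ⟨s, rfl⟩
    cases s with
    | inl j => exact Or.inl ⟨j, by funext s; cases s with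
        | inl i => simp [vA, eq_comm]
        | inr i => simp [vA]⟩
    | inr j => exact Or.inr ⟨j, by funext s; cases s with
        | inl i => simp [vC]
        | inr i => simp [vC, eq_comm]⟩

lemma delta0_eq (k : ℕ) : Delta0 k = stdSimplex ℝ (Fin k ⊕ Fin k) := by
  rw [Delta0, setAC]
  convert convexHull_basis_eq_stdSimplex (R := ℝ) (Fin k ⊕ Fin k) using 6 with i j

/-- The face lemma: a point of a convex hull on which a nonnegative linear
functional vanishes lies in the hull of the vanishing generators. -/
lemma face_lemma {k : ℕ} {S : Set (V k)} (φ : V k →ₗ[ℝ] ℝ)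
    (hS : ∀ z ∈ S, 0 ≤ φ z) {p : V k} (hp : p ∈ convexHull ℝ S) (h0 : φ p = 0) :
    p ∈ convexHull ℝ {z ∈ S | φ z = 0} := by
  rw [convexHull_eq] at hp
  obtain ⟨ι, t, w, z, hw₀, hw₁, hz, rfl⟩ := hp
  have hcm : t.centerMass w z = ∑ i ∈ t, w i • z i := by
    rw [Finset.centerMass_eq_of_sum_1 _ _ hw₁]
  have hsum : ∑ i ∈ t, w i * φ (z i) = 0 := by
    rw [← h0, hcm]
    simp [map_sum, map_smul, smul_eq_mul]
  have hterm : ∀ i ∈ t, w i * φ (z i) = 0 :=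
    (Finset.sum_eq_zero_iff_of_nonneg
      (fun i hi => mul_nonneg (hw₀ i hi) (hS _ (hz i hi)))).1 hsum
  rw [← Finset.centerMass_filter_ne_zero]
  refine Finset.centerMass_mem_convexHull _ (fun i hi => hw₀ i (Finset.mem_filter.1 hi).1) ?_ ?_
  · rw [Finset.sum_filter_ne_zero, hw₁]; exact one_pos
  · intro i hi
    rw [Finset.mem_filter] at hi
    refine ⟨hz i hi.1, ?_⟩
    rcases mul_eq_zero.1 (hterm i hi.1) with h | h
    · exact absurd h hi.2
    · exact h

lemma hull_le {k : ℕ} {S : Set (V k)} (φ : V k →ₗ[ℝ] ℝ) {c : ℝ}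
    (hS : ∀ z ∈ S, φ z ≤ c) {p : V k} (hp : p ∈ convexHull ℝ S) : φ p ≤ c :=
  convexHull_min hS (convex_halfSpace_le (LinearMap.isLinear φ) c) hp

lemma hull_ge {k : ℕ} {S : Set (V k)} (φ : V k →ₗ[ℝ] ℝ) {c : ℝ}
    (hS : ∀ z ∈ S, c ≤ φ z) {p : V k} (hp : p ∈ convexHull ℝ S) : c ≤ φ p :=
  convexHull_min hS (convex_halfSpace_ge (LinearMap.isLinear φ) c) hp

lemma hull_eqv {k : ℕ} {S : Set (V k)} (φ : V k →ₗ[ℝ] ℝ) {c : ℝ}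
    (hS : ∀ z ∈ S, φ z = c) {p : V k} (hp : p ∈ convexHull ℝ S) : φ p = c :=
  convexHull_min hS (convex_hyperplane (LinearMap.isLinear φ) c) hp

/-! ### Linear functionals -/

def sumL (k : ℕ) : V k →ₗ[ℝ] ℝ := ∑ i : Fin k, LinearMap.proj (Sum.inl i)
def sumR (k : ℕ) : V k →ₗ[ℝ] ℝ := ∑ i : Fin k, LinearMap.proj (Sum.inr i)

lemma sumL_apply (k : ℕ) (x : V k) : sumL k x = ∑ i : Fin k, x (Sum.inl i) := by
  simp [sumL]
lemma sumR_apply (k : ℕ) (x : V k) : sumR k x = ∑ i : Fin k, x (Sum.inr i) := by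
  simp [sumR]

section values
variable {k : ℕ} (hk : 2 ≤ k)
include hk

lemma hD : (0:ℝ) < 2 * (2 * (k:ℝ) - 1) := by
  have : (2:ℝ) ≤ (k:ℝ) := by exact_mod_cast hk
  nlinarith

lemma sum_ite_one (j : Fin k) :
    ∑ i : Fin k, (2 - if i = j then (1:ℝ) else 0) = 2 * (k:ℝ) - 1 := by
  rw [Finset.sum_sub_distrib, Finset.sum_const, Finset.sum_ite_eq' Finset.univ j fun _ => (1:ℝ)]
  simp [mul_comm]

lemma sumL_vA (j : Fin k) : sumL k (vA k j) = 1 := by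
  rw [sumL_apply]
  simp [vA, Finset.sum_ite_eq' Finset.univ j fun _ => (1:ℝ)]
lemma sumR_vA (j : Fin k) : sumR k (vA k j) = 0 := by
  rw [sumR_apply]; simp [vA]
lemma sumL_vC (j : Fin k) : sumL k (vC k j) = 0 := by
  rw [sumL_apply]; simp [vC]
lemma sumR_vC (j : Fin k) : sumR k (vC k j) = 1 := by
  rw [sumR_apply]
  simp [vC, Finset.sum_ite_eq' Finset.univ j fun _ => (1:ℝ)]

lemma sumL_vB (j : Fin k) : sumL k (vB k j) = 1 / 2 := by
  rw [sumL_apply]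
  have h0 := hD hk
  have h1 : (2 * (2 * (k:ℝ) - 1)) ≠ 0 := ne_of_gt h0
  rw [show (∑ i : Fin k, vB k j (Sum.inl i))
      = (∑ i : Fin k, (2 - if i = j then (1:ℝ) else 0)) / (2 * (2 * (k : ℝ) - 1)) by
    rw [Finset.sum_div]; rfl]
  rw [sum_ite_one hk]
  rw [div_eq_iff h1]
  ring

lemma sumR_vB (j : Fin k) : sumR k (vB k j) = 1 / 2 := by
  rw [sumR_apply]
  have h0 := hD hk
  have h1 : (2 * (2 * (k:ℝ) - 1)) ≠ 0 := ne_of_gt h0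
  rw [show (∑ i : Fin k, vB k j (Sum.inr i))
      = (∑ i : Fin k, (2 - if i = j then (1:ℝ) else 0)) / (2 * (2 * (k : ℝ) - 1)) by
    rw [Finset.sum_div]; rfl]
  rw [sum_ite_one hk]
  rw [div_eq_iff h1]
  ring

lemma vB_pos (j : Fin k) (s : Fin k ⊕ Fin k) : 0 < vB k j s := by
  have h0 := hD hk
  cases s with
  | inl i =>
      show 0 < (2 - if i = j then (1:ℝ) else 0) / (2 * (2 * (k : ℝ) - 1))
      apply div_pos _ h0
      split <;> norm_num
  | inr i =>
      show 0 < (2 - if i = j then (1:ℝ) else 0) / (2 * (2 * (k : ℝ) - 1))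
      apply div_pos _ h0
      split <;> norm_num

lemma vA_nonneg (j : Fin k) (s : Fin k ⊕ Fin k) : 0 ≤ vA k j s := by
  cases s with
  | inl i => show (0:ℝ) ≤ if i = j then 1 else 0; split <;> norm_num
  | inr i => exact le_refl 0

lemma vC_nonneg (j : Fin k) (s : Fin k ⊕ Fin k) : 0 ≤ vC k j s := by
  cases s with
  | inl i => exact le_refl 0
  | inr i => show (0:ℝ) ≤ if i = j then 1 else 0; split <;> norm_num

lemma vB_mem_delta0 (j : Fin k) : vB k j ∈ Delta0 k := by
  rw [delta0_eq]
  refine ⟨fun s => (vB_pos hk j s).le, ?_⟩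
  rw [Fintype.sum_sum_type]
  have hL : ∑ i : Fin k, vB k j (Sum.inl i) = 1 / 2 := by
    rw [← sumL_apply]; exact sumL_vB hk j
  have hR : ∑ i : Fin k, vB k j (Sum.inr i) = 1 / 2 := by
    rw [← sumR_apply]; exact sumR_vB hk j
  rw [hL, hR]; norm_num

end values

/-! ### Intrinsic interior of `Δ₀` -/

/-- the hyperplane `∑ x = 1` as an affine subspace -/
def hyp (k : ℕ) : AffineSubspace ℝ (V k) where
  carrier := {x | ∑ s, x s = 1}
  smul_vsub_vadd_mem' := by
    intro c p1 p2 p3 h1 h2 h3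
    simp only [Set.mem_setOf_eq, vsub_eq_sub, vadd_eq_add] at *
    simp [Finset.sum_add_distrib, Finset.sum_sub_distrib, ← Finset.mul_sum, h1, h2, h3]

lemma affineSpan_delta0_le (k : ℕ) {x : V k} (hx : x ∈ affineSpan ℝ (Delta0 k)) :
    ∑ s, x s = 1 := by
  have h : affineSpan ℝ (Delta0 k) ≤ hyp k := by
    rw [affineSpan_le]
    intro z hz
    rw [delta0_eq] at hz
    exact hz.2
  exact h hx

lemma mem_intrinsicInterior_delta0 {k : ℕ} {x : V k} (hx : x ∈ Delta0 k)
    (hpos : ∀ s, 0 < x s) : x ∈ intrinsicInterior ℝ (Delta0 k) := by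
  have hxs : x ∈ affineSpan ℝ (Delta0 k) := subset_affineSpan ℝ _ hx
  refine ⟨⟨x, hxs⟩, ?_, rfl⟩
  rw [mem_interior_iff_mem_nhds]
  have hmem : ∀ s : Fin k ⊕ Fin k,
      {z : affineSpan ℝ (Delta0 k) | 0 < (z : V k) s} ∈
        nhds (⟨x, hxs⟩ : affineSpan ℝ (Delta0 k)) :=
    fun s => (isOpen_lt continuous_const
      ((continuous_apply s).comp continuous_subtype_val)).mem_nhds (hpos s)
  refine Filter.mem_of_superset (Filter.iInter_mem.2 hmem) ?_
  intro z hz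
  simp only [Set.mem_iInter, Set.mem_setOf_eq] at hz
  have hsub : stdSimplex ℝ (Fin k ⊕ Fin k) ⊆ Delta0 k := le_of_eq (delta0_eq k).symm
  exact hsub ⟨fun s => le_of_lt (hz s), affineSpan_delta0_le k z.2⟩

/-- generic intrinsic-frontier membership via an escaping direction -/
lemma mem_intrinsicFrontier_of {k : ℕ} {Δ : Set (V k)} {p v : V k} (hp : p ∈ Δ)
    (hv : ∀ t : ℝ, 0 < t → p + t • v ∈ affineSpan ℝ Δ)
    (hout : ∀ t : ℝ, 0 < t → p + t • v ∉ Δ) :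
    p ∈ intrinsicFrontier ℝ Δ := by
  have hps : p ∈ affineSpan ℝ Δ := subset_affineSpan ℝ Δ hp
  refine ⟨⟨p, hps⟩, ?_, rfl⟩
  rw [frontier, Set.mem_diff]
  refine ⟨subset_closure hp, ?_⟩
  intro hint
  rw [mem_interior_iff_mem_nhds, Metric.mem_nhds_iff] at hint
  obtain ⟨ε, hε, hball⟩ := hint
  set t := ε / (2 * (‖v‖ + 1)) with ht
  have ht0 : 0 < t := div_pos hε (by positivity)
  have hq : p + t • v ∈ affineSpan ℝ Δ := hv t ht0
  have hmem : (⟨p + t • v, hq⟩ : affineSpan ℝ Δ) ∈ Metric.ball (⟨p, hps⟩ : affineSpan ℝ Δ) ε := by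
    rw [Metric.mem_ball, Subtype.dist_eq]
    have hd : dist (p + t • v) p = t * ‖v‖ := by
      rw [dist_eq_norm]
      simp [norm_smul, abs_of_pos ht0]
    rw [hd]
    have h1 : t * (‖v‖ + 1) = ε / 2 := by
      rw [ht]; field_simp
    nlinarith [norm_nonneg v]
  exact hout t ht0 (hball hmem)

/-- `⟨A ∪ B⟩ ∩ ⟨B ∪ C⟩ = ⟨B⟩`; every point of `B` lies in the intrinsic interior of
`Δ₀`, so the intrinsic boundaries of `Δ₀` and `Δ₁` meet exactly in `⟨A⟩`, and the
intrinsic boundaries of `Δ₀` and `Δ₂` meet exactly in `⟨C⟩`. -/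
theorem stmt_5 (k : ℕ) (hk : 2 ≤ k) :
    Delta1 k ∩ Delta2 k = convexHull ℝ (setB k) ∧
    setB k ⊆ intrinsicInterior ℝ (Delta0 k) ∧
    intrinsicFrontier ℝ (Delta0 k) ∩ intrinsicFrontier ℝ (Delta1 k)
      = convexHull ℝ (setA k) ∧
    intrinsicFrontier ℝ (Delta0 k) ∩ intrinsicFrontier ℝ (Delta2 k)
      = convexHull ℝ (setC k) := by
  classical
  set φ : V k →ₗ[ℝ] ℝ := sumL k - sumR k with hφ
  have hφA : ∀ j, φ (vA k j) = 1 := fun j => by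
    simp [hφ, LinearMap.sub_apply, sumL_vA hk, sumR_vA hk]
  have hφB : ∀ j, φ (vB k j) = 0 := fun j => by
    simp [hφ, LinearMap.sub_apply, sumL_vB hk, sumR_vB hk]
  have hφC : ∀ j, φ (vC k j) = -1 := fun j => by
    simp [hφ, LinearMap.sub_apply, sumL_vC hk, sumR_vC hk]
  have hfA : (setA k).Finite := Set.finite_range _
  have hfB : (setB k).Finite := Set.finite_range _
  have hfC : (setC k).Finite := Set.finite_range _
  have hclosed0 : IsClosed (Delta0 k) := ((hfA.union hfC).isCompact_convexHull (𝕜 := ℝ)).isClosed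
  have hclosed1 : IsClosed (Delta1 k) := ((hfA.union hfB).isCompact_convexHull (𝕜 := ℝ)).isClosed
  have hclosed2 : IsClosed (Delta2 k) := ((hfB.union hfC).isCompact_convexHull (𝕜 := ℝ)).isClosed
  have j0 : Fin k := ⟨0, by omega⟩
  -- affine span step
  have spanStep : ∀ (Δ : Set (V k)) (a b p : V k), a ∈ Δ → b ∈ Δ → p ∈ Δ →
      ∀ t : ℝ, 0 < t → p + t • (a - b) ∈ affineSpan ℝ Δ := by
    intro Δ a b p ha hb hp t ht
    have h := AffineSubspace.smul_vsub_vadd_mem (affineSpan ℝ Δ) t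
      (subset_affineSpan ℝ Δ ha) (subset_affineSpan ℝ Δ hb) (subset_affineSpan ℝ Δ hp)
    simpa [vsub_eq_sub, vadd_eq_add, add_comm] using h
  have evalStep : ∀ (ψ : V k →ₗ[ℝ] ℝ) (p a b : V k) (t : ℝ),
      ψ (p + t • (a - b)) = ψ p + t * (ψ a - ψ b) := by
    intro ψ p a b t
    simp [map_add, map_smul, map_sub, smul_eq_mul, mul_sub]
  -- frontier points of Delta0 have a zero coordinate
  have zeroCoord : ∀ p ∈ intrinsicFrontier ℝ (Delta0 k), p ∈ Delta0 k ∧ ∃ s, p s = 0 := by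
    intro p hp
    have hp0 : p ∈ Delta0 k := intrinsicFrontier_subset hclosed0 hp
    refine ⟨hp0, ?_⟩
    by_contra h
    push_neg at h
    have hps : p ∈ stdSimplex ℝ (Fin k ⊕ Fin k) := (delta0_eq k) ▸ hp0
    have hpos : ∀ s, 0 < p s := fun s => lt_of_le_of_ne (hps.1 s) (Ne.symm (h s))
    have hint : p ∈ intrinsicInterior ℝ (Delta0 k) := mem_intrinsicInterior_delta0 hp0 hpos
    have hni : p ∉ intrinsicInterior ℝ (Delta0 k) := by
      have hd := intrinsicClosure_diff_intrinsicInterior (𝕜 := ℝ) (Delta0 k)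
      rw [← hd] at hp
      exact hp.2
    exact hni hint
  -- nonnegativity of generators
  have hABnn : ∀ s, ∀ z ∈ setA k ∪ setB k, 0 ≤ (LinearMap.proj s : V k →ₗ[ℝ] ℝ) z := by
    rintro s z (⟨j, rfl⟩ | ⟨j, rfl⟩)
    · exact vA_nonneg hk j s
    · exact (vB_pos hk j s).le
  have hBCnn : ∀ s, ∀ z ∈ setB k ∪ setC k, 0 ≤ (LinearMap.proj s : V k →ₗ[ℝ] ℝ) z := by
    rintro s z (⟨j, rfl⟩ | ⟨j, rfl⟩)
    · exact (vB_pos hk j s).le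
    · exact vC_nonneg hk j s
  -- Claim 1
  have h1 : Delta1 k ∩ Delta2 k = convexHull ℝ (setB k) := by
    apply Set.Subset.antisymm
    · rintro p ⟨hp1, hp2⟩
      have hge : 0 ≤ φ p := hull_ge φ (by
        rintro z (⟨j, rfl⟩ | ⟨j, rfl⟩)
        · rw [hφA j]; norm_num
        · rw [hφB j]) hp1
      have hle : φ p ≤ 0 := hull_le φ (by
        rintro z (⟨j, rfl⟩ | ⟨j, rfl⟩)
        · rw [hφB j]
        · rw [hφC j]; norm_num) hp2
      have h0 : φ p = 0 := le_antisymm hle hge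
      have hface := face_lemma φ (by
        rintro z (⟨j, rfl⟩ | ⟨j, rfl⟩)
        · rw [hφA j]; norm_num
        · rw [hφB j]) hp1 h0
      refine convexHull_mono ?_ hface
      rintro z ⟨(⟨j, rfl⟩ | ⟨j, rfl⟩), hz0⟩
      · rw [hφA j] at hz0; norm_num at hz0
      · exact ⟨j, rfl⟩
    · exact Set.subset_inter
        (convexHull_mono Set.subset_union_right)
        (convexHull_mono Set.subset_union_left)
  -- Claim 2
  have h2 : setB k ⊆ intrinsicInterior ℝ (Delta0 k) := by
    rintro _ ⟨j, rfl⟩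
    exact mem_intrinsicInterior_delta0 (vB_mem_delta0 hk j) (vB_pos hk j)
  -- membership of generators in hulls
  have hAin0 : ∀ j, vA k j ∈ Delta0 k :=
    fun j => subset_convexHull ℝ _ (Or.inl ⟨j, rfl⟩)
  have hCin0 : ∀ j, vC k j ∈ Delta0 k :=
    fun j => subset_convexHull ℝ _ (Or.inr ⟨j, rfl⟩)
  have hAin1 : ∀ j, vA k j ∈ Delta1 k :=
    fun j => subset_convexHull ℝ _ (Or.inl ⟨j, rfl⟩)
  have hBin1 : ∀ j, vB k j ∈ Delta1 k :=
    fun j => subset_convexHull ℝ _ (Or.inr ⟨j, rfl⟩)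
  have hBin2 : ∀ j, vB k j ∈ Delta2 k :=
    fun j => subset_convexHull ℝ _ (Or.inl ⟨j, rfl⟩)
  have hCin2 : ∀ j, vC k j ∈ Delta2 k :=
    fun j => subset_convexHull ℝ _ (Or.inr ⟨j, rfl⟩)
  -- conv A ⊆ intrinsic frontier of Delta0
  have hA_fr0 : convexHull ℝ (setA k) ⊆ intrinsicFrontier ℝ (Delta0 k) := by
    intro p hp
    have hp0 : p ∈ Delta0 k := convexHull_mono Set.subset_union_left hp
    have hpR : sumR k p = 0 := hull_eqv (sumR k) (by rintro z ⟨j, rfl⟩; exact sumR_vA hk j) hp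
    refine mem_intrinsicFrontier_of hp0
      (spanStep _ _ _ _ (hAin0 j0) (hCin0 j0) hp0) ?_
    intro t ht hmem
    have hge : 0 ≤ sumR k (p + t • (vA k j0 - vC k j0)) := hull_ge (sumR k) (by
      rintro z (⟨j, rfl⟩ | ⟨j, rfl⟩)
      · rw [sumR_vA hk j]
      · rw [sumR_vC hk j]; norm_num) hmem
    rw [evalStep, hpR, sumR_vA hk j0, sumR_vC hk j0] at hge
    nlinarith
  -- conv C ⊆ intrinsic frontier of Delta0
  have hC_fr0 : convexHull ℝ (setC k) ⊆ intrinsicFrontier ℝ (Delta0 k) := by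
    intro p hp
    have hp0 : p ∈ Delta0 k := convexHull_mono Set.subset_union_right hp
    have hpL : sumL k p = 0 := hull_eqv (sumL k) (by rintro z ⟨j, rfl⟩; exact sumL_vC hk j) hp
    refine mem_intrinsicFrontier_of hp0
      (spanStep _ _ _ _ (hCin0 j0) (hAin0 j0) hp0) ?_
    intro t ht hmem
    have hge : 0 ≤ sumL k (p + t • (vC k j0 - vA k j0)) := hull_ge (sumL k) (by
      rintro z (⟨j, rfl⟩ | ⟨j, rfl⟩)
      · rw [sumL_vA hk j]; norm_num
      · rw [sumL_vC hk j]) hmem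
    rw [evalStep, hpL, sumL_vC hk j0, sumL_vA hk j0] at hge
    nlinarith
  -- conv A ⊆ intrinsic frontier of Delta1
  have hA_fr1 : convexHull ℝ (setA k) ⊆ intrinsicFrontier ℝ (Delta1 k) := by
    intro p hp
    have hp1 : p ∈ Delta1 k := convexHull_mono Set.subset_union_left hp
    have hpφ : φ p = 1 := hull_eqv φ (by rintro z ⟨j, rfl⟩; exact hφA j) hp
    refine mem_intrinsicFrontier_of hp1
      (spanStep _ _ _ _ (hAin1 j0) (hBin1 j0) hp1) ?_
    intro t ht hmem
    have hle : φ (p + t • (vA k j0 - vB k j0)) ≤ 1 := hull_le φ (by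
      rintro z (⟨j, rfl⟩ | ⟨j, rfl⟩)
      · rw [hφA j]
      · rw [hφB j]; norm_num) hmem
    rw [evalStep, hpφ, hφA j0, hφB j0] at hle
    nlinarith
  -- conv C ⊆ intrinsic frontier of Delta2
  have hC_fr2 : convexHull ℝ (setC k) ⊆ intrinsicFrontier ℝ (Delta2 k) := by
    intro p hp
    have hp2 : p ∈ Delta2 k := convexHull_mono Set.subset_union_right hp
    have hpφ : φ p = -1 := hull_eqv φ (by rintro z ⟨j, rfl⟩; exact hφC j) hp
    refine mem_intrinsicFrontier_of hp2
      (spanStep _ _ _ _ (hCin2 j0) (hBin2 j0) hp2) ?_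
    intro t ht hmem
    have hge : -1 ≤ φ (p + t • (vC k j0 - vB k j0)) := hull_ge φ (by
      rintro z (⟨j, rfl⟩ | ⟨j, rfl⟩)
      · rw [hφB j]; norm_num
      · rw [hφC j]) hmem
    rw [evalStep, hpφ, hφC j0, hφB j0] at hge
    nlinarith
  -- Claim 3
  have h3 : intrinsicFrontier ℝ (Delta0 k) ∩ intrinsicFrontier ℝ (Delta1 k)
      = convexHull ℝ (setA k) := by
    apply Set.Subset.antisymm
    · rintro p ⟨hp0f, hp1f⟩
      obtain ⟨hp0, s, hs⟩ := zeroCoord p hp0f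
      have hp1 : p ∈ Delta1 k := intrinsicFrontier_subset hclosed1 hp1f
      have hface := face_lemma (LinearMap.proj s) (hABnn s) hp1 hs
      refine convexHull_mono ?_ hface
      rintro z ⟨(⟨j, rfl⟩ | ⟨j, rfl⟩), hz0⟩
      · exact ⟨j, rfl⟩
      · exact absurd hz0 (vB_pos hk j s).ne'
    · exact Set.subset_inter hA_fr0 hA_fr1
  -- Claim 4
  have h4 : intrinsicFrontier ℝ (Delta0 k) ∩ intrinsicFrontier ℝ (Delta2 k)
      = convexHull ℝ (setC k) := by
    apply Set.Subset.antisymm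
    · rintro p ⟨hp0f, hp2f⟩
      obtain ⟨hp0, s, hs⟩ := zeroCoord p hp0f
      have hp2 : p ∈ Delta2 k := intrinsicFrontier_subset hclosed2 hp2f
      have hface := face_lemma (LinearMap.proj s) (hBCnn s) hp2 hs
      refine convexHull_mono ?_ hface
      rintro z ⟨(⟨j, rfl⟩ | ⟨j, rfl⟩), hz0⟩
      · exact absurd hz0 (vB_pos hk j s).ne'
      · exact ⟨j, rfl⟩
    · exact Set.subset_inter hC_fr0 hC_fr2
  exact ⟨h1, h2, h3, h4⟩
end
end

section
/- Let S₁ be a good set and let Y ∈ S₁ be such that S₁ \ {Y} is not contained in A ∪ C. Then there is exactly one good set S₂ different from S₁ that contains S₁ \ {Y}; namely S₂ = (S₁ \ {Y}) ∪ {Z}, where Z is the unique element of the triple {A_j, B_j, C_j} containing Y that does not belong to S₁. -/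
noncomputable section

section Aux
variable {k : ℕ}

/-- The `j`-th triple. -/
def TT (k : ℕ) (j : Fin k) : Set (V k) := {vA k j, vB k j, vC k j}

lemma TT_def (k : ℕ) (j : Fin k) :
    TT k j = ({vA k j, vB k j, vC k j} : Set (V k)) := rfl

lemma twon_pos (hk : 2 ≤ k) : (0:ℝ) < 2 * (2 * (k:ℝ) - 1) := by
  have h2 : (2:ℝ) ≤ (k:ℝ) := by exact_mod_cast hk
  nlinarith

lemma vA_ne_vB (hk : 2 ≤ k) (i j : Fin k) : vA k i ≠ vB k j := by
  intro h
  have hn := twon_pos hk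
  have h2 := congrFun h (Sum.inr j)
  simp only [vA, vB] at h2
  rw [if_true] at h2
  have h3 : (0:ℝ) < (2 - 1) / (2 * (2 * (k:ℝ) - 1)) := by positivity
  linarith

lemma vC_ne_vB (hk : 2 ≤ k) (i j : Fin k) : vC k i ≠ vB k j := by
  intro h
  have hn := twon_pos hk
  have h2 := congrFun h (Sum.inl j)
  simp only [vC, vB] at h2
  rw [if_true] at h2
  have h3 : (0:ℝ) < (2 - 1) / (2 * (2 * (k:ℝ) - 1)) := by positivity
  linarith

lemma vA_ne_vC (i j : Fin k) : vA k i ≠ vC k j := by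
  intro h
  have := congrFun h (Sum.inl i)
  simp [vA, vC] at this

lemma vA_inj {i j : Fin k} (h : vA k i = vA k j) : i = j := by
  by_contra hne
  have := congrFun h (Sum.inl i)
  simp [vA, if_pos rfl, if_neg hne] at this

lemma vC_inj {i j : Fin k} (h : vC k i = vC k j) : i = j := by
  by_contra hne
  have := congrFun h (Sum.inr i)
  simp [vC, if_pos rfl, if_neg hne] at this

lemma vB_inj (hk : 2 ≤ k) {i j : Fin k} (h : vB k i = vB k j) : i = j := by
  by_contra hne
  have hn := twon_pos hk
  have h2 := congrFun h (Sum.inl i)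
  simp only [vB] at h2
  rw [if_true, if_neg hne] at h2
  rw [div_eq_div_iff (ne_of_gt hn) (ne_of_gt hn)] at h2
  nlinarith

end Aux
section Aux2
variable {k : ℕ}

lemma TT_disj (hk : 2 ≤ k) {j j' : Fin k} {x : V k}
    (h : x ∈ TT k j) (h' : x ∈ TT k j') : j = j' := by
  simp only [TT, Set.mem_insert_iff, Set.mem_singleton_iff] at h h'
  rcases h with rfl | rfl | rfl <;> rcases h' with h' | h' | h'
  · exact vA_inj h'
  · exact absurd h' (vA_ne_vB hk _ _)
  · exact absurd h' (vA_ne_vC _ _)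
  · exact absurd h'.symm (vA_ne_vB hk _ _)
  · exact vB_inj hk h'
  · exact absurd h'.symm (vC_ne_vB hk _ _)
  · exact absurd h'.symm (vA_ne_vC _ _)
  · exact absurd h' (vC_ne_vB hk _ _)
  · exact vC_inj h'

lemma mem_setX_iff {x : V k} : x ∈ setX k ↔ ∃ j, x ∈ TT k j := by
  constructor
  · rintro ((⟨j, rfl⟩ | ⟨j, rfl⟩) | ⟨j, rfl⟩)
    · exact ⟨j, Or.inl rfl⟩
    · exact ⟨j, Or.inr (Or.inl rfl)⟩
    · exact ⟨j, Or.inr (Or.inr rfl)⟩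
  · rintro ⟨j, (rfl | rfl | rfl)⟩
    · exact Or.inl (Or.inl ⟨j, rfl⟩)
    · exact Or.inl (Or.inr ⟨j, rfl⟩)
    · exact Or.inr ⟨j, rfl⟩

lemma TT_subset_setX (j : Fin k) : TT k j ⊆ setX k := by
  intro x hx; exact mem_setX_iff.mpr ⟨j, hx⟩

lemma TT_finite (j : Fin k) : (TT k j).Finite := (Set.finite_singleton _).insert _ |>.insert _

lemma setX_finite (k : ℕ) : (setX k).Finite :=
  ((Set.finite_range _).union (Set.finite_range _)).union (Set.finite_range _)

lemma TT_ncard (hk : 2 ≤ k) (j : Fin k) : (TT k j).ncard = 3 :=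
  Set.ncard_eq_three.mpr ⟨_, _, _, vA_ne_vB hk j j, vA_ne_vC j j,
    fun h => vC_ne_vB hk j j h.symm, rfl⟩

end Aux2
section Aux3
variable {k : ℕ}

lemma good_inter (hk : 2 ≤ k) {S : Set (V k)} (hS : IsGood k S) (j : Fin k) :
    (S ∩ TT k j).ncard = 2 := by
  classical
  obtain ⟨hsub, hcard, htrip, -⟩ := hS
  have hfin : S.Finite := (setX_finite k).subset hsub
  set F : Finset (V k) := hfin.toFinset with hF
  have hFmem : ∀ x, x ∈ F ↔ x ∈ S := fun x => hfin.mem_toFinset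
  have hFcard : F.card = 2 * k := by
    rw [← Set.ncard_eq_toFinset_card S hfin]; exact hcard
  set G : Fin k → Finset (V k) := fun j' => (TT_finite j').toFinset ∩ F with hG
  have hGmem : ∀ j' x, x ∈ G j' ↔ x ∈ TT k j' ∧ x ∈ S := by
    intro j' x
    simp only [hG, Finset.mem_inter, Set.Finite.mem_toFinset, hFmem]
  have hGcoe : ∀ j', (S ∩ TT k j').ncard = (G j').card := by
    intro j'
    have : S ∩ TT k j' = ↑(G j') := by
      ext x; simp [hGmem, and_comm]
    rw [this, Set.ncard_coe_finset]
  have hUnion : F = Finset.univ.biUnion G := by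
    ext x
    simp only [Finset.mem_biUnion, Finset.mem_univ, true_and, hGmem, hFmem]
    constructor
    · intro hx
      obtain ⟨j', hj'⟩ := mem_setX_iff.mp (hsub hx)
      exact ⟨j', hj', hx⟩
    · rintro ⟨j', -, hx⟩; exact hx
  have hdisj : ∀ j₁ ∈ (Finset.univ : Finset (Fin k)), ∀ j₂ ∈ Finset.univ,
      j₁ ≠ j₂ → Disjoint (G j₁) (G j₂) := by
    intro j₁ _ j₂ _ hne
    rw [Finset.disjoint_left]
    intro x hx₁ hx₂
    exact hne (TT_disj hk ((hGmem j₁ x).mp hx₁).1 ((hGmem j₂ x).mp hx₂).1)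
  have hsum : ∑ j' : Fin k, (G j').card = 2 * k := by
    rw [← Finset.card_biUnion hdisj, ← hUnion, hFcard]
  have hle : ∀ j' : Fin k, (G j').card ≤ 2 := by
    intro j'
    obtain ⟨z, hz, hzS⟩ := Set.not_subset.mp (htrip j')
    have hzT : z ∈ TT k j' := hz
    have hGsub : G j' ⊆ (TT_finite j').toFinset := Finset.inter_subset_left
    have hcard3 : ((TT_finite j').toFinset).card = 3 := by
      rw [← Set.ncard_eq_toFinset_card _ (TT_finite j')]; exact TT_ncard hk j'
    have hzG : z ∉ G j' := fun h => hzS ((hGmem j' z).mp h).2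
    have : G j' ⊂ (TT_finite j').toFinset :=
      ⟨hGsub, fun h => hzG (h ((Set.Finite.mem_toFinset _).mpr hzT))⟩
    have := Finset.card_lt_card this
    omega
  have hall : ∀ j' ∈ (Finset.univ : Finset (Fin k)), (G j').card = 2 := by
    rw [← Finset.sum_eq_sum_iff_of_le (fun i _ => hle i)]
    rw [hsum, Finset.sum_const, Finset.card_univ, Fintype.card_fin, smul_eq_mul]
    ring
  rw [hGcoe]; exact hall j (Finset.mem_univ j)

/-- Exactly one element of each triple is missing from a good set. -/
lemma good_missing (hk : 2 ≤ k) {S : Set (V k)} (hS : IsGood k S) (j : Fin k) :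
    ∃ z, TT k j \ S = {z} := by
  have h1 : TT k j \ S = TT k j \ (S ∩ TT k j) := by
    ext x
    simp only [Set.mem_diff, Set.mem_inter_iff]
    tauto
  have h2 : (TT k j \ S).ncard = 1 := by
    rw [h1, Set.ncard_diff Set.inter_subset_right
      (((setX_finite k).subset hS.1).inter_of_left _), good_inter hk hS j, TT_ncard hk j]
  exact Set.ncard_eq_one.mp h2

end Aux3

/-- Let `S₁` be good and `Y ∈ S₁` with `S₁ \ {Y} ⊄ A ∪ C`.  There is exactly one good
set `S₂ ≠ S₁` containing `S₁ \ {Y}`; namely `S₂ = (S₁ \ {Y}) ∪ {Z}` where `Z` is the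
element of the triple `{A_j, B_j, C_j}` containing `Y` that does not belong to `S₁`. -/
theorem stmt_6 (k : ℕ) (hk : 2 ≤ k) (S₁ : Set (V k)) (hS₁ : IsGood k S₁)
    (Y : V k) (hY : Y ∈ S₁) (hnot : ¬ (S₁ \ {Y} ⊆ setA k ∪ setC k)) :
    (∃! S₂ : Set (V k), IsGood k S₂ ∧ S₂ ≠ S₁ ∧ S₁ \ {Y} ⊆ S₂) ∧
    (∀ j : Fin k, Y ∈ ({vA k j, vB k j, vC k j} : Set (V k)) →
      ∀ Z ∈ ({vA k j, vB k j, vC k j} : Set (V k)), Z ∉ S₁ →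
        ∀ S₂ : Set (V k), IsGood k S₂ → S₂ ≠ S₁ → S₁ \ {Y} ⊆ S₂ →
          S₂ = (S₁ \ {Y}) ∪ {Z}) := by
  classical
  have hfin1 : S₁.Finite := (setX_finite k).subset hS₁.1
  obtain ⟨j₀, hYj⟩ := mem_setX_iff.mp (hS₁.1 hY)
  obtain ⟨z₀, hz₀⟩ := good_missing hk hS₁ j₀
  have hz₀mem : z₀ ∈ TT k j₀ := by
    have : z₀ ∈ TT k j₀ \ S₁ := hz₀ ▸ rfl
    exact this.1
  have hz₀not : z₀ ∉ S₁ := by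
    have : z₀ ∈ TT k j₀ \ S₁ := hz₀ ▸ rfl
    exact this.2
  have hYne : Y ≠ z₀ := fun h => hz₀not (h ▸ hY)
  have hdiffc : (S₁ \ {Y}).ncard = 2 * k - 1 := by
    rw [Set.ncard_diff_singleton_of_mem hY, hS₁.2.1]
  have hdifffin : (S₁ \ {Y}).Finite := hfin1.diff
  -- the key uniqueness lemma
  have key : ∀ S : Set (V k), IsGood k S → S ≠ S₁ → S₁ \ {Y} ⊆ S →
      S = (S₁ \ {Y}) ∪ {z₀} := by
    intro S hG hne hsubd
    have hfinS : S.Finite := (setX_finite k).subset hG.1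
    have hdc : (S \ (S₁ \ {Y})).ncard = 1 := by
      rw [Set.ncard_diff hsubd hdifffin, hG.2.1, hdiffc]
      omega
    obtain ⟨w, hw⟩ := Set.ncard_eq_one.mp hdc
    have hSeq : S = (S₁ \ {Y}) ∪ {w} := by
      rw [← hw, Set.union_diff_cancel hsubd]
    have hwS : w ∈ S := by
      have : w ∈ S \ (S₁ \ {Y}) := hw ▸ rfl
      exact this.1
    have hwnot : w ∉ S₁ \ {Y} := by
      have : w ∈ S \ (S₁ \ {Y}) := hw ▸ rfl
      exact this.2
    have hwY : w ≠ Y := by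
      intro h
      apply hne
      rw [hSeq, h, Set.union_singleton, Set.insert_diff_singleton,
        Set.insert_eq_self.mpr hY]
    have hwS₁ : w ∉ S₁ := fun h => hwnot ⟨h, hwY⟩
    obtain ⟨j₁, hwj⟩ := mem_setX_iff.mp (hG.1 hwS)
    have hj₁ : j₁ = j₀ := by
      by_contra hne'
      obtain ⟨m, hm⟩ := good_missing hk hS₁ j₁
      have hwm : w = m := by
        have : w ∈ TT k j₁ \ S₁ := ⟨hwj, hwS₁⟩
        rw [hm] at this; exact this
      have hsubT : TT k j₁ ⊆ S := by
        intro x hx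
        by_cases hxw : x = w
        · exact hxw ▸ hwS
        · have hxS₁ : x ∈ S₁ := by
            by_contra hxn
            have : x ∈ TT k j₁ \ S₁ := ⟨hx, hxn⟩
            rw [hm] at this
            exact hxw (this.trans hwm.symm)
          have hxY : x ≠ Y := fun h => hne' (TT_disj hk (h ▸ hx) hYj)
          exact hsubd ⟨hxS₁, hxY⟩
      exact hG.2.2.1 j₁ hsubT
    have hwz : w = z₀ := by
      have : w ∈ TT k j₀ \ S₁ := ⟨hj₁ ▸ hwj, hwS₁⟩
      rw [hz₀] at this; exact this
    rw [hSeq, hwz]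
  -- the candidate set is good
  set S₂ := (S₁ \ {Y}) ∪ {z₀} with hS₂def
  have hz₀S₂ : z₀ ∈ S₂ := Or.inr rfl
  have hz₀nd : z₀ ∉ S₁ \ {Y} := fun h => hz₀not h.1
  have hgood : IsGood k S₂ := by
    refine ⟨?_, ?_, ?_, ?_⟩
    · intro x hx
      rcases hx with h | h
      · exact hS₁.1 h.1
      · exact TT_subset_setX j₀ (h ▸ hz₀mem)
    · rw [hS₂def, Set.union_singleton, Set.ncard_insert_of_notMem hz₀nd hdifffin, hdiffc]
      omega
    · intro j hsubT
      by_cases hj : j = j₀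
      · subst hj
        have hYS₂ : Y ∈ S₂ := hsubT hYj
        rcases hYS₂ with h | h
        · exact h.2 rfl
        · exact hYne h
      · have hTsub : TT k j ⊆ S₁ := by
          intro x hx
          rcases hsubT hx with h | h
          · exact h.1
          · exact absurd (TT_disj hk hx (h ▸ hz₀mem)) hj
        exact hS₁.2.2.1 j hTsub
    · intro hAC
      obtain ⟨w₀, hw₀d, hw₀n⟩ := Set.not_subset.mp hnot
      have : w₀ ∈ S₂ := Or.inl hw₀d
      rw [hAC] at this
      exact hw₀n this
  have hneS : S₂ ≠ S₁ := fun h => hz₀not (h ▸ hz₀S₂)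
  have hsubS : S₁ \ {Y} ⊆ S₂ := Set.subset_union_left
  constructor
  · exact ⟨S₂, ⟨hgood, hneS, hsubS⟩, fun S hS => key S hS.1 hS.2.1 hS.2.2⟩
  · intro j hYj' Z hZtrip hZnot S hSgood hSne hsub
    have hj : j = j₀ := TT_disj hk hYj' hYj
    have hZz : Z = z₀ := by
      have : Z ∈ TT k j₀ \ S₁ := ⟨hj ▸ hZtrip, hZnot⟩
      rw [hz₀] at this; exact this
    rw [hZz]
    exact key S hSgood hSne hsub
end
end

section
/- Let S be a good set with A₁ ∈ S and B₁ ∈ S. Fix an enumeration of the elements of S as the rows of a 2k × 2k real matrix M_A, and let M_C be the matrix obtained from M_A by replacing the row equal to A₁ with C₁ (all other rows unchanged). Then det(M_A) = −det(M_C); equivalently, the matrix obtained by replacing the row A₁ with A₁ + C₁ has determinant zero. -/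
noncomputable section

/-- Let `S` be good with `A₁, B₁ ∈ S`.  Enumerate the elements of `S` as the rows of a
`2k × 2k` matrix `M_A`; let `M_C` be obtained by replacing the row equal to `A₁` with
`C₁`.  Then `det(M_A) = −det(M_C)`; equivalently, replacing the row `A₁` by `A₁ + C₁`
yields a matrix of determinant zero. -/
theorem stmt_8 (k : ℕ) (hk : 2 ≤ k) (S : Set (V k)) (hS : IsGood k S)
    (hA1 : vA k ⟨0, by omega⟩ ∈ S) (hB1 : vB k ⟨0, by omega⟩ ∈ S)
    (r : (Fin k ⊕ Fin k) → V k) (hr : Function.Injective r)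
    (hrange : Set.range r = S)
    (i₀ : Fin k ⊕ Fin k) (hi₀ : r i₀ = vA k ⟨0, by omega⟩) :
    (Matrix.of fun i j => r i j).det =
      -(Matrix.of fun i j => Function.update r i₀ (vC k ⟨0, by omega⟩) i j).det ∧
    (Matrix.of fun i j =>
      Function.update r i₀ (vA k ⟨0, by omega⟩ + vC k ⟨0, by omega⟩) i j).det = 0 := by
  have hk0 : 0 < k := by omega
  set z : Fin k := ⟨0, hk0⟩ with hz
  -- C₁ ∉ S since the triple at index z is not fully contained
  have hC1 : vC k z ∉ S := by
    intro h
    refine hS.2.2.1 z ?_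
    intro x hx
    simp only [Set.mem_insert_iff, Set.mem_singleton_iff] at hx
    rcases hx with h1 | h1 | h1 <;> subst h1
    · exact hA1
    · exact hB1
    · exact h
  set M : Matrix (Fin k ⊕ Fin k) (Fin k ⊕ Fin k) ℝ :=
    Matrix.of fun i j => Function.update r i₀ (vA k z + vC k z) i j with hM
  -- every row of M has equal values at columns inl z and inr z
  have hrow : ∀ i, M i (Sum.inl z) = M i (Sum.inr z) := by
    intro i
    by_cases hii : i = i₀
    · subst hii
      simp only [hM, Matrix.of_apply, Function.update_self]
      simp [vA, vC]
    · have hMi : ∀ j, M i j = r i j := by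
        intro j
        simp only [hM, Matrix.of_apply, Function.update_of_ne hii]
      rw [hMi, hMi]
      have hmem : r i ∈ S := by
        rw [← hrange]; exact ⟨i, rfl⟩
      have hX : r i ∈ setX k := hS.1 hmem
      rcases hX with (⟨j, hj⟩ | ⟨j, hj⟩) | ⟨j, hj⟩
      · -- r i = vA k j, with j ≠ z
        have hjz : j ≠ z := by
          intro h; subst h
          exact hii (hr (hj.symm.trans hi₀.symm))
        rw [← hj]
        simp [vA, Ne.symm hjz]
      · rw [← hj]; simp [vB]
      · have hjz : j ≠ z := by
          intro h; subst h
          rw [← hj] at hmem; exact hC1 hmem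
        rw [← hj]
        simp [vC, Ne.symm hjz]
  -- the kernel vector
  have hdet0 : M.det = 0 := by
    rw [← Matrix.exists_mulVec_eq_zero_iff]
    refine ⟨fun c => Sum.elim (fun i => if i = z then (1 : ℝ) else 0)
      (fun i => if i = z then (-1 : ℝ) else 0) c, ?_, ?_⟩
    · intro h
      have := congrFun h (Sum.inl z)
      simp at this
    · funext i
      simp only [Matrix.mulVec, dotProduct, Fintype.sum_sum_type, Sum.elim_inl, Sum.elim_inr,
        mul_ite, mul_one, mul_zero, mul_neg, Finset.sum_ite_eq', Finset.mem_univ, if_true,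
        Pi.zero_apply]
      rw [hrow i]
      ring
  -- rewrite M as an updateRow and use multilinearity
  have hupd : ∀ w : V k,
      (Matrix.of fun i j => Function.update r i₀ w i j) =
        Matrix.updateRow (Matrix.of fun i j => r i j) i₀ w := by
    intro w
    ext i j
    by_cases hii : i = i₀
    · subst hii; simp [Matrix.updateRow_apply]
    · simp [Matrix.updateRow_apply, hii, Function.update_of_ne hii]
  have hMsplit : M.det =
      (Matrix.of fun i j => r i j).det +
        (Matrix.of fun i j => Function.update r i₀ (vC k z) i j).det := by
    rw [hM, hupd, hupd, Matrix.det_updateRow_add]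
    congr 1
    have : Matrix.updateRow (Matrix.of fun i j => r i j) i₀ (vA k z) =
        Matrix.of fun i j => r i j := by
      ext i j
      by_cases hii : i = i₀
      · subst hii; simp [Matrix.updateRow_apply, ← hi₀]
      · simp [Matrix.updateRow_apply, hii]
    rw [this]
  constructor
  · have := hMsplit.symm.trans hdet0
    linarith
  · exact hdet0
end
end

section
/- For every pair of good sets S₁ and S₂, convexHull(S₁) ∩ convexHull(S₂) = convexHull(S₁ ∩ S₂). (In particular, the good simplices triangulate Δ₀: any two of them intersect exactly in the convex hull of their common vertices.) -/
noncomputable section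

namespace Stmt10
open Finset
def pt (k : ℕ) (p : Fin k × Fin 3) : V k :=
  if p.2 = 0 then vA k p.1 else if p.2 = 1 then vB k p.1 else vC k p.1
variable {k : ℕ} {i j : Fin k}
lemma pt_zero (j : Fin k) : pt k (j, 0) = vA k j := rfl
lemma pt_one (j : Fin k) : pt k (j, 1) = vB k j := rfl
lemma pt_two (j : Fin k) : pt k (j, 2) = vC k j := rfl
lemma vA_inl : vA k j (Sum.inl i) = if i = j then 1 else 0 := rfl
lemma vA_inr : vA k j (Sum.inr i) = 0 := rfl
lemma vB_inl : vB k j (Sum.inl i) = (2 - if i = j then 1 else 0) / (2 * (2 * (k : ℝ) - 1)) := rfl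
lemma vB_inr : vB k j (Sum.inr i) = (2 - if i = j then 1 else 0) / (2 * (2 * (k : ℝ) - 1)) := rfl
lemma vC_inl : vC k j (Sum.inl i) = 0 := rfl
lemma vC_inr : vC k j (Sum.inr i) = if i = j then 1 else 0 := rfl

lemma eval_inl (w : Fin k × Fin 3 → ℝ) (i : Fin k) :
    (∑ p : Fin k × Fin 3, w p • pt k p) (Sum.inl i)
      = w (i,0) + (2 * (∑ j, w (j,1)) - w (i,1)) / (2 * (2 * (k : ℝ) - 1)) := by
  have h1 : (∑ p : Fin k × Fin 3, w p • pt k p) (Sum.inl i)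
      = ∑ p : Fin k × Fin 3, w p * pt k p (Sum.inl i) := by
    rw [Finset.sum_apply]; rfl
  rw [h1, Fintype.sum_prod_type]
  have h2 : ∀ j : Fin k, (∑ m : Fin 3, w (j, m) * pt k (j, m) (Sum.inl i))
      = (if i = j then w (j,0) else 0)
        + ((2 * w (j,1) - if i = j then w (j,1) else 0) / (2 * (2 * (k : ℝ) - 1))) := by
    intro j
    rw [Fin.sum_univ_three, pt_zero, pt_one, pt_two, vA_inl, vB_inl, vC_inl]
    split_ifs <;> ring
  simp only [h2]
  rw [Finset.sum_add_distrib, Finset.sum_ite_eq, ← Finset.sum_div,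
    Finset.sum_sub_distrib, Finset.sum_ite_eq, ← Finset.mul_sum]
  simp

lemma eval_inr (w : Fin k × Fin 3 → ℝ) (i : Fin k) :
    (∑ p : Fin k × Fin 3, w p • pt k p) (Sum.inr i)
      = w (i,2) + (2 * (∑ j, w (j,1)) - w (i,1)) / (2 * (2 * (k : ℝ) - 1)) := by
  have h1 : (∑ p : Fin k × Fin 3, w p • pt k p) (Sum.inr i)
      = ∑ p : Fin k × Fin 3, w p * pt k p (Sum.inr i) := by
    rw [Finset.sum_apply]; rfl
  rw [h1, Fintype.sum_prod_type]
  have h2 : ∀ j : Fin k, (∑ m : Fin 3, w (j, m) * pt k (j, m) (Sum.inr i))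
      = (if i = j then w (j,2) else 0)
        + ((2 * w (j,1) - if i = j then w (j,1) else 0) / (2 * (2 * (k : ℝ) - 1))) := by
    intro j
    rw [Fin.sum_univ_three, pt_zero, pt_one, pt_two, vA_inr, vB_inr, vC_inr]
    split_ifs <;> ring
  simp only [h2]
  rw [Finset.sum_add_distrib, Finset.sum_ite_eq, ← Finset.sum_div,
    Finset.sum_sub_distrib, Finset.sum_ite_eq, ← Finset.mul_sum]
  simp

lemma Npos (hk : 2 ≤ k) : (0:ℝ) < 2 * (2 * (k : ℝ) - 1) := by
  have : (2:ℝ) ≤ (k:ℝ) := by exact_mod_cast hk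
  nlinarith

lemma vA_ne_vB (hk : 2 ≤ k) : vA k i ≠ vB k j := by
  intro h
  have h2 := congrFun h (Sum.inr j)
  rw [vA_inr, vB_inr, if_pos rfl] at h2
  have hN := Npos hk
  rw [eq_comm, div_eq_zero_iff] at h2
  rcases h2 with h2 | h2 <;> nlinarith

lemma vB_ne_vC (hk : 2 ≤ k) : vB k i ≠ vC k j := by
  intro h
  have h2 := congrFun h (Sum.inl i)
  rw [vC_inl, vB_inl, if_pos rfl] at h2
  have hN := Npos hk
  rw [div_eq_zero_iff] at h2
  rcases h2 with h2 | h2 <;> nlinarith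

lemma vA_ne_vC : vA k i ≠ vC k j := by
  intro h
  have h2 := congrFun h (Sum.inl i)
  rw [vC_inl, vA_inl, if_pos rfl] at h2
  norm_num at h2

lemma vA_injective : Function.Injective (vA k) := by
  intro i j h
  have h2 := congrFun h (Sum.inl i)
  rw [vA_inl, vA_inl, if_pos rfl] at h2
  by_contra hne
  rw [if_neg hne] at h2
  norm_num at h2

lemma vC_injective : Function.Injective (vC k) := by
  intro i j h
  have h2 := congrFun h (Sum.inr i)
  rw [vC_inr, vC_inr, if_pos rfl] at h2
  by_contra hne
  rw [if_neg hne] at h2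
  norm_num at h2

lemma vB_injective (hk : 2 ≤ k) : Function.Injective (vB k) := by
  intro i j h
  have h2 := congrFun h (Sum.inl i)
  rw [vB_inl, vB_inl, if_pos rfl] at h2
  by_contra hne
  rw [if_neg hne] at h2
  have hN := Npos hk
  rw [div_eq_div_iff (by nlinarith) (by nlinarith)] at h2
  nlinarith

lemma pt_inj (hk : 2 ≤ k) : Function.Injective (pt k) := by
  rintro ⟨j₁, m₁⟩ ⟨j₂, m₂⟩ h
  fin_cases m₁ <;> fin_cases m₂ <;>
    simp only [pt_zero, pt_one, pt_two] at h
  · have hj : j₁ = j₂ := vA_injective h; subst hj; rfl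
  · exact absurd h (vA_ne_vB hk)
  · exact absurd h vA_ne_vC
  · exact absurd h.symm (vA_ne_vB hk)
  · have hj : j₁ = j₂ := vB_injective hk h; subst hj; rfl
  · exact absurd h (vB_ne_vC hk)
  · exact absurd h.symm vA_ne_vC
  · exact absurd h.symm (vB_ne_vC hk)
  · have hj : j₁ = j₂ := vC_injective h; subst hj; rfl

lemma range_pt : Set.range (pt k) = setX k := by
  ext x
  constructor
  · rintro ⟨⟨j, m⟩, rfl⟩
    fin_cases m
    · exact Or.inl (Or.inl ⟨j, rfl⟩)
    · exact Or.inl (Or.inr ⟨j, rfl⟩)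
    · exact Or.inr ⟨j, rfl⟩
  · rintro ((⟨j, rfl⟩ | ⟨j, rfl⟩) | ⟨j, rfl⟩)
    exacts [⟨(j, 0), rfl⟩, ⟨(j, 1), rfl⟩, ⟨(j, 2), rfl⟩]

lemma mem_hull_iff (hk : 2 ≤ k) (T : Finset (Fin k × Fin 3)) (x : V k) :
    x ∈ convexHull ℝ (pt k '' ↑T) ↔
      ∃ w : Fin k × Fin 3 → ℝ, (∀ p, 0 ≤ w p) ∧ (∀ p ∉ T, w p = 0) ∧
        (∑ p, w p) = 1 ∧ (∑ p, w p • pt k p) = x := by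
  classical
  have hinj := pt_inj (k := k) hk
  have hco : pt k '' ↑T = ↑(T.image (pt k)) := by rw [Finset.coe_image]
  rw [hco, Finset.convexHull_eq]
  constructor
  · rintro ⟨w₀, hw₀, hsum, hcm⟩
    have hsum' : ∑ p ∈ T, w₀ (pt k p) = 1 := by
      rw [← Finset.sum_image (fun x _ y _ h => hinj h)]; exact hsum
    refine ⟨fun p => if p ∈ T then w₀ (pt k p) else 0, ?_, ?_, ?_, ?_⟩
    · intro p
      show 0 ≤ if p ∈ T then w₀ (pt k p) else 0
      split_ifs with hp
      · exact hw₀ _ (Finset.mem_image_of_mem _ hp)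
      · exact le_refl 0
    · intro p hp; simp [if_neg hp]
    · simpa [Finset.sum_ite_mem, Finset.univ_inter] using hsum'
    · have h5 : ∑ p : Fin k × Fin 3, (if p ∈ T then w₀ (pt k p) else 0) • pt k p
          = ∑ p ∈ T, w₀ (pt k p) • pt k p := by
        have h6 : ∀ p : Fin k × Fin 3, (if p ∈ T then w₀ (pt k p) else 0) • pt k p
            = if p ∈ T then w₀ (pt k p) • pt k p else 0 := by
          intro p; split_ifs <;> simp
        rw [Finset.sum_congr rfl fun p _ => h6 p, Finset.sum_ite_mem, Finset.univ_inter]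
      rw [Finset.centerMass_eq_of_sum_1 _ id hsum] at hcm
      simp only [id] at hcm
      show ∑ p : Fin k × Fin 3, (if p ∈ T then w₀ (pt k p) else 0) • pt k p = x
      rw [h5, ← Finset.sum_image (g := pt k) (f := fun y => w₀ y • y)
        (fun a _ b _ h => hinj h)]
      exact hcm
  · rintro ⟨w, hw0, hwT, hsum, hx⟩
    set w₀ : V k → ℝ := fun y => ∑ p ∈ T.filter (fun p => pt k p = y), w p with hw₀def
    have hfib : ∀ q ∈ T, w₀ (pt k q) = w q := by
      intro q hq
      have : T.filter (fun p => pt k p = pt k q) = {q} := by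
        ext p
        simp only [Finset.mem_filter, Finset.mem_singleton]
        constructor
        · rintro ⟨-, hpq⟩; exact hinj hpq
        · rintro rfl; exact ⟨hq, rfl⟩
      rw [hw₀def]; simp only; rw [this, Finset.sum_singleton]
    have hTsum : ∑ p ∈ T, w p = 1 := by
      rw [Finset.sum_subset (Finset.subset_univ T) (fun p _ hp => hwT p hp)]
      exact hsum
    have hsum0 : ∑ y ∈ T.image (pt k), w₀ y = 1 := by
      rw [Finset.sum_image (fun x _ y _ h => hinj h)]
      rw [Finset.sum_congr rfl hfib]
      exact hTsum
    refine ⟨w₀, fun y _ => ?_, hsum0, ?_⟩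
    · exact Finset.sum_nonneg fun p _ => hw0 p
    · rw [Finset.centerMass_eq_of_sum_1 _ id hsum0]
      simp only [id]
      rw [Finset.sum_image (g := pt k) (f := fun y => w₀ y • y) (fun a _ b _ h => hinj h)]
      rw [Finset.sum_congr rfl (fun q hq => by rw [hfib q hq])]
      rw [Finset.sum_subset (Finset.subset_univ T)
        (fun p _ hp => by rw [hwT p hp, zero_smul])]
      exact hx

lemma good_struct (hk : 2 ≤ k) {S : Set (V k)} (h : IsGood k S) :
    ∃ o : Fin k → Fin 3, (∃ j, o j ≠ 1) ∧ ∀ p : Fin k × Fin 3, (pt k p ∈ S ↔ p.2 ≠ o p.1) := by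
  classical
  obtain ⟨hS1, hS2, hS3, hS4⟩ := h
  have hinj := pt_inj (k := k) hk
  set F : Finset (Fin k × Fin 3) := Finset.univ.filter (fun p => pt k p ∈ S) with hF
  have hmemF : ∀ p : Fin k × Fin 3, p ∈ F ↔ pt k p ∈ S := by
    intro p; simp [hF]
  have hSF : S = pt k '' ↑F := by
    ext x
    constructor
    · intro hx
      have hx' : x ∈ Set.range (pt k) := range_pt ▸ hS1 hx
      obtain ⟨p, rfl⟩ := hx'
      exact ⟨p, by simpa [hmemF p] using hx, rfl⟩
    · rintro ⟨p, hp, rfl⟩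
      exact (hmemF p).1 hp
  have hcard : F.card = 2 * k := by
    have h1 : S.ncard = F.card := by
      rw [hSF, Set.ncard_image_of_injective _ hinj, Set.ncard_coe_finset]
    rw [← h1, hS2]
  have hGcard : Fᶜ.card = k := by
    rw [Finset.card_compl, hcard]
    simp only [Fintype.card_prod, Fintype.card_fin]
    omega
  have hGsurj : ∀ j : Fin k, ∃ m : Fin 3, (j, m) ∈ Fᶜ := by
    intro j
    by_contra hcon
    push_neg at hcon
    apply hS3 j
    have hall : ∀ m : Fin 3, pt k (j, m) ∈ S := by
      intro m
      have := hcon m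
      rw [Finset.mem_compl, not_not, hmemF] at this
      exact this
    intro y hy
    rcases hy with rfl | rfl | rfl
    · exact hall 0
    · exact hall 1
    · exact hall 2
  have himg : Fᶜ.image Prod.fst = Finset.univ := by
    apply Finset.eq_univ_of_forall
    intro j
    obtain ⟨m, hm⟩ := hGsurj j
    exact Finset.mem_image.2 ⟨(j, m), hm, rfl⟩
  have hinjOn : Set.InjOn Prod.fst (↑(Fᶜ) : Set (Fin k × Fin 3)) := by
    rw [← Finset.card_image_iff, himg, Finset.card_univ, Fintype.card_fin, hGcard]
  set o : Fin k → Fin 3 := fun j => (hGsurj j).choose with ho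
  have hoG : ∀ j, (j, o j) ∈ Fᶜ := fun j => (hGsurj j).choose_spec
  have hGiff : ∀ p : Fin k × Fin 3, p ∈ Fᶜ ↔ p.2 = o p.1 := by
    rintro ⟨j, m⟩
    constructor
    · intro hp
      have := hinjOn (Finset.mem_coe.2 hp) (Finset.mem_coe.2 (hoG j)) rfl
      exact congrArg Prod.snd this
    · rintro h
      simp only at h
      rw [h]
      exact hoG j
  have hmain : ∀ p : Fin k × Fin 3, pt k p ∈ S ↔ p.2 ≠ o p.1 := by
    intro p
    rw [← hmemF, ← not_iff_not, not_not, ← Finset.mem_compl, hGiff]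
  refine ⟨o, ?_, hmain⟩
  by_contra hcon
  push_neg at hcon
  apply hS4
  ext x
  constructor
  · intro hx
    have hx' : x ∈ Set.range (pt k) := range_pt ▸ hS1 hx
    obtain ⟨⟨j, m⟩, rfl⟩ := hx'
    have hm : m ≠ o j := (hmain (j, m)).1 hx
    rw [hcon j] at hm
    fin_cases m
    · exact Or.inl ⟨j, rfl⟩
    · exact absurd rfl hm
    · exact Or.inr ⟨j, rfl⟩
  · rintro (⟨j, rfl⟩ | ⟨j, rfl⟩)
    · apply (hmain (j, 0)).2
      intro hbad
      rw [hcon j] at hbad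
      simp at hbad
    · apply (hmain (j, 2)).2
      intro hbad
      rw [hcon j] at hbad
      simp at hbad

lemma weights_eq (hk : 2 ≤ k) (o₁ o₂ : Fin k → Fin 3)
    (ho₁ : ∃ j, o₁ j ≠ 1) (ho₂ : ∃ j, o₂ j ≠ 1)
    (w₁ w₂ : Fin k × Fin 3 → ℝ)
    (hw₁0 : ∀ p, 0 ≤ w₁ p) (hw₂0 : ∀ p, 0 ≤ w₂ p)
    (hv₁ : ∀ j, w₁ (j, o₁ j) = 0) (hv₂ : ∀ j, w₂ (j, o₂ j) = 0)
    (heq : (∑ p, w₁ p • pt k p) = (∑ p, w₂ p • pt k p)) :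
    w₁ = w₂ := by
  have hN : (0:ℝ) < 2 * (2 * (k : ℝ) - 1) := Npos hk
  have hN' : (2 * (2 * (k : ℝ) - 1)) ≠ 0 := ne_of_gt hN
  set N : ℝ := 2 * (2 * (k : ℝ) - 1) with hNdef
  set t : Fin k → ℝ := fun j => w₁ (j,1) - w₂ (j,1) with htdef
  set T : ℝ := (∑ j, w₁ (j,1)) - (∑ j, w₂ (j,1)) with hTdef
  have hT : (∑ j, t j) = T := by
    rw [hTdef, htdef, Finset.sum_sub_distrib]
  have e1 : ∀ i : Fin k, w₁ (i,0) + (2 * (∑ j, w₁ (j,1)) - w₁ (i,1)) / N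
      = w₂ (i,0) + (2 * (∑ j, w₂ (j,1)) - w₂ (i,1)) / N := by
    intro i
    rw [← eval_inl w₁ i, ← eval_inl w₂ i, heq]
  have e2 : ∀ i : Fin k, w₁ (i,2) + (2 * (∑ j, w₁ (j,1)) - w₁ (i,1)) / N
      = w₂ (i,2) + (2 * (∑ j, w₂ (j,1)) - w₂ (i,1)) / N := by
    intro i
    rw [← eval_inr w₁ i, ← eval_inr w₂ i, heq]
  have key0 : ∀ i : Fin k, w₁ (i,0) - w₂ (i,0) = (t i - 2 * T) / N := by
    intro i
    have := e1 i
    field_simp [htdef, hTdef] at this ⊢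
    linarith
  have key2 : ∀ i : Fin k, w₁ (i,2) - w₂ (i,2) = (t i - 2 * T) / N := by
    intro i
    have := e2 i
    field_simp [htdef, hTdef] at this ⊢
    linarith
  -- sign constraints
  have hub : ∀ j, o₁ j = 1 → t j ≤ 0 := by
    intro j hj
    have h1 : w₁ (j, 1) = 0 := by rw [← hj]; exact hv₁ j
    have := hw₂0 (j, 1)
    simp only [htdef]
    linarith
  have hlb : ∀ j, o₂ j = 1 → 0 ≤ t j := by
    intro j hj
    have h1 : w₂ (j, 1) = 0 := by rw [← hj]; exact hv₂ j
    have := hw₁0 (j, 1)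
    simp only [htdef]
    linarith
  have hub' : ∀ j, o₁ j ≠ 1 → t j ≤ 2 * T := by
    intro j hj
    have h3 : o₁ j = 0 ∨ o₁ j = 2 := by
      have : ∀ m : Fin 3, m = 0 ∨ m = 1 ∨ m = 2 := by decide
      rcases this (o₁ j) with h | h | h
      · exact Or.inl h
      · exact absurd h hj
      · exact Or.inr h
    have hdiv : (t j - 2 * T) / N ≤ 0 := by
      rcases h3 with h | h
      · have h1 : w₁ (j, 0) = 0 := by rw [← h]; exact hv₁ j
        have := hw₂0 (j, 0)
        rw [← key0 j] at *
        linarith [key0 j]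
      · have h1 : w₁ (j, 2) = 0 := by rw [← h]; exact hv₁ j
        have := hw₂0 (j, 2)
        linarith [key2 j]
    have h8 := (div_le_iff₀ hN).mp hdiv
    linarith
  have hlb' : ∀ j, o₂ j ≠ 1 → 2 * T ≤ t j := by
    intro j hj
    have h3 : o₂ j = 0 ∨ o₂ j = 2 := by
      have : ∀ m : Fin 3, m = 0 ∨ m = 1 ∨ m = 2 := by decide
      rcases this (o₂ j) with h | h | h
      · exact Or.inl h
      · exact absurd h hj
      · exact Or.inr h
    have hdiv : 0 ≤ (t j - 2 * T) / N := by
      rcases h3 with h | h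
      · have h1 : w₂ (j, 0) = 0 := by rw [← h]; exact hv₂ j
        have := hw₁0 (j, 0)
        linarith [key0 j]
      · have h1 : w₂ (j, 2) = 0 := by rw [← h]; exact hv₂ j
        have := hw₁0 (j, 2)
        linarith [key2 j]
    have h8 := (le_div_iff₀ hN).mp hdiv
    linarith
  -- T = 0
  have hT0 : T = 0 := by
    rcases lt_trichotomy T 0 with hlt | h0 | hgt
    · -- all t j ≤ 0, and some t j₁ ≤ 2T
      obtain ⟨j₁, hj₁⟩ := ho₁
      have hall : ∀ j, t j ≤ 0 := by
        intro j
        by_cases h : o₁ j = 1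
        · exact hub j h
        · linarith [hub' j h]
      have hsingle : (∑ j, t j) ≤ t j₁ := by
        have h9 := Finset.single_le_sum (f := fun j => -t j)
          (fun j _ => by
            show (0:ℝ) ≤ -t j
            linarith [hall j]) (Finset.mem_univ j₁)
        have h10 : (∑ x : Fin k, (fun j => -t j) x) = -(∑ j, t j) := by
          simp
        rw [h10] at h9
        linarith
      have := hub' j₁ hj₁
      rw [hT] at hsingle
      linarith
    · exact h0
    · obtain ⟨j₂, hj₂⟩ := ho₂
      have hall : ∀ j, 0 ≤ t j := by
        intro j
        by_cases h : o₂ j = 1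
        · exact hlb j h
        · linarith [hlb' j h]
      have hsingle : t j₂ ≤ (∑ j, t j) :=
        Finset.single_le_sum (fun j _ => hall j) (Finset.mem_univ j₂)
      have := hlb' j₂ hj₂
      rw [hT] at hsingle
      linarith
  -- t = 0
  have ht0 : ∀ j, t j = 0 := by
    intro j
    have h1 : t j ≤ 0 := by
      by_cases h : o₁ j = 1
      · exact hub j h
      · have := hub' j h; rw [hT0] at this; linarith
    have h2 : 0 ≤ t j := by
      by_cases h : o₂ j = 1
      · exact hlb j h
      · have := hlb' j h; rw [hT0] at this; linarith
    linarith
  funext p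
  obtain ⟨j, m⟩ := p
  have hb : w₁ (j,1) = w₂ (j,1) := by
    have := ht0 j; simp only [htdef] at this; linarith
  have ha : w₁ (j,0) = w₂ (j,0) := by
    have := key0 j
    rw [ht0 j, hT0] at this
    simp at this
    linarith
  have hc : w₁ (j,2) = w₂ (j,2) := by
    have := key2 j
    rw [ht0 j, hT0] at this
    simp at this
    linarith
  fin_cases m
  · exact ha
  · exact hb
  · exact hc
end Stmt10

/-- Any two good simplices intersect exactly in the convex hull of their common
vertices: the good simplices triangulate `Δ₀`. -/
theorem stmt_10 (k : ℕ) (hk : 2 ≤ k) (S₁ S₂ : Set (V k))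
    (h₁ : IsGood k S₁) (h₂ : IsGood k S₂) :
    convexHull ℝ S₁ ∩ convexHull ℝ S₂ = convexHull ℝ (S₁ ∩ S₂) := by
  classical
  apply Set.Subset.antisymm
  · intro x hx
    obtain ⟨hx1, hx2⟩ := hx
    obtain ⟨o₁, ho₁, hm₁⟩ := Stmt10.good_struct hk h₁
    obtain ⟨o₂, ho₂, hm₂⟩ := Stmt10.good_struct hk h₂
    set T₁ : Finset (Fin k × Fin 3) := Finset.univ.filter (fun p => p.2 ≠ o₁ p.1) with hT₁
    set T₂ : Finset (Fin k × Fin 3) := Finset.univ.filter (fun p => p.2 ≠ o₂ p.1) with hT₂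
    have hset : ∀ (S : Set (V k)) (o : Fin k → Fin 3)
        (hm : ∀ p : Fin k × Fin 3, (Stmt10.pt k p ∈ S ↔ p.2 ≠ o p.1))
        (hsub : S ⊆ setX k),
        S = Stmt10.pt k '' ↑(Finset.univ.filter
          (fun p : Fin k × Fin 3 => p.2 ≠ o p.1)) := by
      intro S o hm hsub
      ext y
      constructor
      · intro hy
        have hy' : y ∈ Set.range (Stmt10.pt k) := Stmt10.range_pt ▸ hsub hy
        obtain ⟨p, rfl⟩ := hy'
        exact ⟨p, by simp [(hm p).1 hy], rfl⟩
      · rintro ⟨p, hp, rfl⟩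
        simp only [Finset.coe_filter, Set.mem_setOf_eq] at hp
        exact (hm p).2 hp.2
    have hS₁ : S₁ = Stmt10.pt k '' ↑T₁ := hset S₁ o₁ hm₁ h₁.1
    have hS₂ : S₂ = Stmt10.pt k '' ↑T₂ := hset S₂ o₂ hm₂ h₂.1
    rw [hS₁] at hx1
    rw [hS₂] at hx2
    obtain ⟨w₁, hw₁0, hw₁T, hw₁s, hw₁x⟩ := (Stmt10.mem_hull_iff hk T₁ x).1 hx1
    obtain ⟨w₂, hw₂0, hw₂T, hw₂s, hw₂x⟩ := (Stmt10.mem_hull_iff hk T₂ x).1 hx2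
    have hv₁ : ∀ j, w₁ (j, o₁ j) = 0 := by
      intro j
      apply hw₁T
      simp [hT₁]
    have hv₂ : ∀ j, w₂ (j, o₂ j) = 0 := by
      intro j
      apply hw₂T
      simp [hT₂]
    have heq : (∑ p, w₁ p • Stmt10.pt k p) = (∑ p, w₂ p • Stmt10.pt k p) := by
      rw [hw₁x, hw₂x]
    have hw : w₁ = w₂ := Stmt10.weights_eq hk o₁ o₂ ho₁ ho₂ w₁ w₂ hw₁0 hw₂0 hv₁ hv₂ heq
    -- now x is a convex combination of points in S₁ ∩ S₂
    set Q : Finset (Fin k × Fin 3) := Finset.univ.filter (fun p => w₁ p ≠ 0) with hQ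
    have hQsum : (∑ p ∈ Q, w₁ p) = 1 := by
      rw [hQ, Finset.sum_filter_ne_zero]
      exact hw₁s
    have hmem : ∀ p ∈ Q, Stmt10.pt k p ∈ S₁ ∩ S₂ := by
      intro p hp
      rw [hQ, Finset.mem_filter] at hp
      have hp1 : p ∈ T₁ := by
        by_contra hcon
        exact hp.2 (hw₁T p hcon)
      have hp2 : p ∈ T₂ := by
        by_contra hcon
        exact hp.2 (hw ▸ hw₂T p hcon)
      constructor
      · apply (hm₁ p).2
        simpa [hT₁] using hp1
      · apply (hm₂ p).2
        simpa [hT₂] using hp2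
    have hcm := Finset.centerMass_mem_convexHull Q (fun p _ => hw₁0 p)
      (by rw [hQsum]; norm_num) hmem
    have hcmx : Q.centerMass w₁ (Stmt10.pt k) = x := by
      rw [Finset.centerMass_eq_of_sum_1 _ _ hQsum]
      rw [Finset.sum_subset (Finset.subset_univ Q) (fun p _ hp => by
        have : w₁ p = 0 := by
          by_contra hcon
          exact hp (by simp [hQ, hcon])
        rw [this, zero_smul])]
      exact hw₁x
    rwa [hcmx] at hcm
  · exact Set.subset_inter
      (convexHull_mono Set.inter_subset_left)
      (convexHull_mono Set.inter_subset_right)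
end
end
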